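/- If a set of dual quaternion vectors {u⁽¹⁾, …, u⁽ⁿ⁾} in DQ^m is right appreciably linearly independent, then it is right linearly independent: Σᵢ u⁽ⁱ⁾ αᵢ = 0 with dual quaternion scalars αᵢ implies all αᵢ = 0. -/
import Mathlib


open TrivSqZeroExt DualNumber

/-- If a family of dual quaternion vectors is right appreciably linearly independent,
then it is right linearly independent. -/
theorem rightLinearIndependent_of_appreciablyLinearIndependent
    {m n : ℕ} (u : Fin n → Fin m → DualNumber (Quaternion ℝ))
    (h : ∀ α : Fin n → DualNumber (Quaternion ℝ),
        (∀ j, (∑ i, u i j * α i).fst = 0) → ∀ i, (α i).fst = 0) :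
    ∀ α : Fin n → DualNumber (Quaternion ℝ),
        (∀ j, (∑ i, u i j * α i) = 0) → ∀ i, α i = 0 := by
  intro α hα
  have h1 : ∀ i, (α i).fst = 0 := h α (fun j => by rw [hα j]; simp)
  have h2 : ∀ i, (α i).snd = 0 := by
    have key := h (fun i => inl (α i).snd) ?_
    · intro i
      have := key i
      simpa using this
    · intro j
      have hs : (∑ i, u i j * α i).snd = 0 := by rw [hα j]; simp
      rw [snd_sum] at hs
      rw [fst_sum]
      rw [← hs]
      refine Finset.sum_congr rfl fun i _ => ?_
      rw [DualNumber.snd_mul, TrivSqZeroExt.fst_mul, TrivSqZeroExt.fst_inl, h1 i]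
      simp
  exact fun i => TrivSqZeroExt.ext (h1 i) (h2 i)
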